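/- For the greedy matrix A(n), the function f, where f(j) is the row index of the first one in column j, is monotonically increasing: if j < k then f(j) ≤ f(k). -/
import Mathlib


/-- Number of ones in row `k` strictly to the left of column `l` (columns `1..l-1`). -/
def rowOnes (a : ℕ → ℕ → Bool) (k l : ℕ) : ℕ :=
  ((Finset.Ico 1 l).filter (fun j => a k j = true)).card

/-- Number of ones in column `l` strictly above row `k` (rows `1..k-1`). -/
def colOnes (a : ℕ → ℕ → Bool) (k l : ℕ) : ℕ :=
  ((Finset.Ico 1 k).filter (fun i => a i l = true)).card

/-- The greedy (first-choice) matrix `A(n)`: entries are placed row by row, left to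
right; a one is placed at `(k,l)` unless the row already has `n+1` ones to the left,
the column already has `n+1` ones above, or a rectangle of ones would be created. -/
def IsGreedy (n : ℕ) (a : ℕ → ℕ → Bool) : Prop :=
  (∀ i j, i = 0 ∨ j = 0 → a i j = false) ∧
  ∀ k l, 1 ≤ k → 1 ≤ l →
    (a k l = true ↔
      rowOnes a k l < n + 1 ∧ colOnes a k l < n + 1 ∧
      ¬ ∃ i j, 1 ≤ i ∧ i < k ∧ 1 ≤ j ∧ j < l ∧
        a i j = true ∧ a i l = true ∧ a k j = true)

/-- Lemma 3.3: for the greedy matrix `A(n)`, the row index `f j` of the first one in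
column `j` is monotonically increasing: if `j < k` then `f j ≤ f k`. -/
theorem stmt4 (n : ℕ) (a : ℕ → ℕ → Bool) (h : IsGreedy n a) (j k : ℕ)
    (hjk : 1 ≤ j) (hjk' : j < k)
    (fj fk : ℕ)
    (hfj : 1 ≤ fj ∧ a fj j = true ∧ ∀ i, 1 ≤ i → a i j = true → fj ≤ i)
    (hfk : 1 ≤ fk ∧ a fk k = true ∧ ∀ i, 1 ≤ i → a i k = true → fk ≤ i) :
    fj ≤ fk := by
  by_contra hlt
  push_neg at hlt
  obtain ⟨hfj1, hfjone, hfjmin⟩ := hfj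
  obtain ⟨hfk1, hfkone, hfkmin⟩ := hfk
  obtain ⟨h0, hg⟩ := h
  -- Show a fk j = true via greedy condition
  have hrowk : rowOnes a fk k < n + 1 ∧ colOnes a fk k < n + 1 ∧ _ :=
    (hg fk k hfk1 (le_trans hjk (le_of_lt hjk'))).mp hfkone
  have hrow : rowOnes a fk j < n + 1 := by
    refine lt_of_le_of_lt ?_ hrowk.1
    unfold rowOnes
    exact Finset.card_le_card (Finset.filter_subset_filter _
      (Finset.Ico_subset_Ico le_rfl (le_of_lt hjk')))
  have hcol : colOnes a fk j = 0 := by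
    unfold colOnes
    rw [Finset.card_eq_zero, Finset.filter_eq_empty_iff]
    intro i hi
    simp only [Finset.mem_Ico] at hi
    intro hai
    have := hfjmin i hi.1 hai
    omega
  have hone : a fk j = true := by
    rw [hg fk j hfk1 hjk]
    refine ⟨hrow, by omega, ?_⟩
    rintro ⟨i, j', hi1, hik, _, _, _, hij, _⟩
    have := hfjmin i hi1 hij
    omega
  have := hfjmin fk hfk1 hone
  omega
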